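/- For the matrix σ = [[2,1],[1,2]] : ℤ² → ℤ², the direct limit lim→(ℤ², σ) fits in a short exact sequence 0 → ℤ[1/3] → lim→(ℤ², σ) → ℤ → 0 which splits, so lim→(ℤ², σ) ≅ ℤ[1/3] ⊕ ℤ, with the ℤ[1/3] summand generated by the class of the eigenvector (1,1). -/

import Mathlib

noncomputable section

/-- The subgroup `ℤ[1/p] ⊆ ℚ` of fractions with denominator a power of `p`. -/
def zOneDiv (p : ℕ) : AddSubgroup ℚ :=
  AddSubgroup.closure {q : ℚ | ∃ n : ℕ, q = 1 / (p : ℚ) ^ n}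

/-- The matrix `[[2,1],[1,2]]` as an endomorphism of `ℤ²`. -/
def sigma : Module.End ℤ (Fin 2 → ℤ) := Matrix.toLin' !![2, 1; 1, 2]

/-- The constant directed system `ℤ² → ℤ² → ⋯` with transition map `σ`. -/
def fSys : ∀ i j : ℕ, i ≤ j → (Fin 2 → ℤ) →ₗ[ℤ] (Fin 2 → ℤ) :=
  fun i j _ => sigma ^ (j - i)

/-- The direct limit `lim→(ℤ², σ)`. -/
def L : Type := Module.DirectLimit (fun _ : ℕ => Fin 2 → ℤ) fSys

instance : AddCommGroup L := Module.DirectLimit.addCommGroup _ fSys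

/-- The class in the direct limit of a vector at stage `k`. -/
def ofL (k : ℕ) (v : Fin 2 → ℤ) : L :=
  Module.DirectLimit.of ℤ ℕ (fun _ : ℕ => Fin 2 → ℤ) fSys k v

lemma pow3_odd (k : ℕ) : ∃ t : ℤ, (3:ℤ)^k = 2*t+1 := by
  induction k with
  | zero => exact ⟨0, rfl⟩
  | succ n ih => obtain ⟨t, ht⟩ := ih; exact ⟨3*t+1, by rw [pow_succ, ht]; ring⟩

lemma mem_zOneDiv {q : ℚ} : q ∈ zOneDiv 3 ↔ ∃ (k : ℕ) (m : ℤ), q = m / 3 ^ k := by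
  constructor
  · intro h
    induction h using AddSubgroup.closure_induction with
    | mem x hx => obtain ⟨n, rfl⟩ := hx; exact ⟨n, 1, by push_cast; ring⟩
    | zero => exact ⟨0, 0, by norm_num⟩
    | add x y _ _ ihx ihy =>
        obtain ⟨k, m, rfl⟩ := ihx; obtain ⟨k', m', rfl⟩ := ihy
        refine ⟨k + k', m * 3 ^ k' + m' * 3 ^ k, ?_⟩
        have h1 : ((3:ℚ)) ^ k ≠ 0 := by positivity
        have h2 : ((3:ℚ)) ^ k' ≠ 0 := by positivity
        field_simp
        rw [pow_add]; push_cast; ring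
    | neg x _ ihx =>
        obtain ⟨k, m, rfl⟩ := ihx; exact ⟨k, -m, by push_cast; ring⟩
  · rintro ⟨k, m, rfl⟩
    have h : (m:ℚ) / 3 ^ k = m • ((1:ℚ) / ((3:ℕ):ℚ) ^ k) := by
      rw [zsmul_eq_mul]; push_cast; ring
    rw [h]
    have hmem : (1:ℚ) / ((3:ℕ):ℚ) ^ k ∈ zOneDiv 3 :=
      AddSubgroup.subset_closure ⟨k, rfl⟩
    exact zsmul_mem hmem m

def gmap (k : ℕ) : (Fin 2 → ℤ) →ₗ[ℤ] ℚ × ℤ where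
  toFun v := (((v 0 : ℚ) + v 1) / 3 ^ k, v 1 - v 0)
  map_add' v w := by
    simp only [Pi.add_apply, Prod.mk_add_mk, Prod.mk.injEq]
    constructor
    · push_cast; ring
    · ring
  map_smul' c v := by
    simp only [Pi.smul_apply, smul_eq_mul, RingHom.id_apply, Prod.smul_mk, zsmul_eq_mul,
      Prod.mk.injEq]
    constructor
    · push_cast; ring
    · ring

lemma sigma_apply (v : Fin 2 → ℤ) :
    sigma v 0 = 2 * v 0 + v 1 ∧ sigma v 1 = v 0 + 2 * v 1 := by
  constructor <;>
  · simp [sigma, Matrix.toLin'_apply, Matrix.mulVec, dotProduct, Fin.sum_univ_two]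
    try ring

lemma g_step (k : ℕ) (v : Fin 2 → ℤ) : gmap (k + 1) (sigma v) = gmap k v := by
  obtain ⟨h0, h1⟩ := sigma_apply v
  simp only [gmap, LinearMap.coe_mk, AddHom.coe_mk, h0, h1, Prod.mk.injEq]
  constructor
  · rw [pow_succ]
    have h3 : ((3:ℚ)) ^ k ≠ 0 := by positivity
    field_simp
    push_cast
    ring
  · ring

lemma g_pow (n : ℕ) : ∀ (k : ℕ) (v : Fin 2 → ℤ), gmap (k + n) ((sigma ^ n) v) = gmap k v := by
  induction n with
  | zero => simp
  | succ n ih =>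
      intro k v
      have h : (sigma ^ (n + 1)) v = (sigma ^ n) (sigma v) := by
        rw [pow_succ]; rfl
      have h2 : k + (n + 1) = (k + 1) + n := by omega
      rw [h, h2, ih (k + 1) (sigma v), g_step]

lemma g_compat : ∀ (i j : ℕ) (hij : i ≤ j) (v : Fin 2 → ℤ),
    gmap j (fSys i j hij v) = gmap i v := by
  intro i j hij v
  obtain ⟨n, rfl⟩ := Nat.exists_eq_add_of_le hij
  have : i + n - i = n := by omega
  rw [fSys, this, g_pow]

def Phi : L →+ ℚ × ℤ :=
  (Module.DirectLimit.lift ℤ ℕ (fun _ : ℕ => Fin 2 → ℤ) fSys gmap g_compat).toAddMonoidHom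

lemma Phi_ofL (k : ℕ) (v : Fin 2 → ℤ) :
    Phi (ofL k v) = (((v 0 : ℚ) + v 1) / 3 ^ k, v 1 - v 0) := by
  show Module.DirectLimit.lift ℤ ℕ (fun _ : ℕ => Fin 2 → ℤ) fSys gmap g_compat
    (Module.DirectLimit.of ℤ ℕ (fun _ : ℕ => Fin 2 → ℤ) fSys k v) = _
  rw [Module.DirectLimit.lift_of]
  rfl

lemma exists_rep (x : L) : ∃ (k : ℕ) (v : Fin 2 → ℤ), x = ofL k v := by
  obtain ⟨k, v, h⟩ := Module.DirectLimit.exists_of (x : Module.DirectLimit (fun _ : ℕ => Fin 2 → ℤ) fSys)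
  exact ⟨k, v, h.symm⟩

lemma Phi_inj : Function.Injective Phi := by
  intro x y hxy
  have h : Phi (x - y) = 0 := by rw [map_sub, hxy, sub_self]
  obtain ⟨k, v, hkv⟩ := exists_rep (x - y)
  rw [hkv, Phi_ofL, Prod.mk_eq_zero] at h
  obtain ⟨h1, h2⟩ := h
  have h3 : ((3:ℚ)) ^ k ≠ 0 := by positivity
  rw [div_eq_zero_iff] at h1
  have h1' : (v 0 : ℚ) + v 1 = 0 := by tauto
  have hv0 : v 0 = 0 := by
    have : ((v 0 : ℚ)) = 0 := by
      have h2' : (v 1 : ℚ) = v 0 := by exact_mod_cast congrArg (fun t : ℤ => (t:ℚ)) (by omega : v 1 = v 0)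
      linarith [h1']
    exact_mod_cast this
  have hv1 : v 1 = 0 := by omega
  have hv : v = 0 := by
    funext i; fin_cases i <;> simpa [hv0, hv1]
  have hxy0 : x - y = 0 := by
    rw [hkv, hv]
    exact map_zero (Module.DirectLimit.of ℤ ℕ (fun _ : ℕ => Fin 2 → ℤ) fSys k)
  exact sub_eq_zero.mp hxy0

def piL : L →+ ℤ := (AddMonoidHom.snd ℚ ℤ).comp Phi

lemma piL_ofL (k : ℕ) (v : Fin 2 → ℤ) : piL (ofL k v) = v 1 - v 0 := by
  simp [piL, Phi_ofL]

def sL : ℤ →+ L := zmultiplesHom L (ofL 0 ![0, 1])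

lemma piL_comp_sL : piL.comp sL = AddMonoidHom.id ℤ := by
  ext
  simp only [AddMonoidHom.comp_apply, AddMonoidHom.id_apply, sL, zmultiplesHom_apply, one_zsmul]
  rw [piL_ofL]
  norm_num

def f0 : ↥(zOneDiv 3) →+ ℚ × ℤ where
  toFun q := (2 * (q : ℚ), 0)
  map_zero' := by simp
  map_add' q q' := by
    simp only [AddSubgroup.coe_add, Prod.mk_add_mk, Prod.mk.injEq]
    constructor
    · ring
    · ring

lemma Phi_ofL_diag (k : ℕ) (m : ℤ) :
    Phi (ofL k ![m, m]) = (2 * ((m : ℚ) / 3 ^ k), 0) := by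
  rw [Phi_ofL]
  simp only [Matrix.cons_val_one, Matrix.head_cons, Matrix.cons_val_zero, sub_self,
    Prod.mk.injEq]
  constructor
  · ring
  · trivial

lemma f0_mem (q : ↥(zOneDiv 3)) : f0 q ∈ Phi.range := by
  obtain ⟨k, m, hq⟩ := mem_zOneDiv.mp q.2
  refine ⟨ofL k ![m, m], ?_⟩
  rw [Phi_ofL_diag]
  simp only [f0, AddMonoidHom.coe_mk, ZeroHom.coe_mk, hq]

def jL : ↥(zOneDiv 3) →+ L :=
  (AddEquiv.toAddMonoidHom (AddMonoidHom.ofInjective Phi_inj).symm).comp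
    (f0.codRestrict Phi.range f0_mem)

lemma Phi_jL (q : ↥(zOneDiv 3)) : Phi (jL q) = (2 * (q : ℚ), 0) := by
  show Phi ((AddMonoidHom.ofInjective Phi_inj).symm ⟨(2 * (q:ℚ), 0), f0_mem q⟩) = _
  rw [AddMonoidHom.apply_ofInjective_symm Phi_inj]

lemma jL_inj : Function.Injective jL := by
  intro q q' h
  have h2 : Phi (jL q) = Phi (jL q') := by rw [h]
  rw [Phi_jL, Phi_jL, Prod.mk.injEq] at h2
  have : (q : ℚ) = q' := by linarith [h2.1]
  exact Subtype.ext this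

lemma jL_eq_diag (k : ℕ) (m : ℤ) :
    jL ⟨(m : ℚ) / 3 ^ k, mem_zOneDiv.mpr ⟨k, m, rfl⟩⟩ = ofL k ![m, m] := by
  apply Phi_inj
  rw [Phi_jL, Phi_ofL_diag]

lemma diag_zsmul (k : ℕ) (m : ℤ) : ofL k ![m, m] = m • ofL k ![1, 1] := by
  apply Phi_inj
  rw [Phi_ofL_diag, AddMonoidHom.map_zsmul, Phi_ofL_diag]
  simp only [Int.cast_one, Prod.smul_mk, smul_zero, Prod.mk.injEq, and_true]
  rw [zsmul_eq_mul]
  ring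

lemma ker_eq_range : piL.ker = jL.range := by
  ext x
  constructor
  · intro hx
    have hx0 : piL x = 0 := hx
    obtain ⟨k, v, rfl⟩ := exists_rep x
    rw [piL_ofL] at hx0
    have hv : v 1 = v 0 := by omega
    have hveq : v = ![v 0, v 0] := by
      funext i; fin_cases i <;> simp [hv]
    refine ⟨⟨(v 0 : ℚ) / 3 ^ k, mem_zOneDiv.mpr ⟨k, v 0, rfl⟩⟩, ?_⟩
    rw [jL_eq_diag, ← hveq]
  · rintro ⟨q, rfl⟩
    show piL (jL q) = 0
    simp [piL, Phi_jL]

lemma range_eq_closure : jL.range = AddSubgroup.closure {x : L | ∃ k : ℕ, x = ofL k ![1, 1]} := by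
  apply le_antisymm
  · rintro x ⟨q, rfl⟩
    obtain ⟨k, m, hq⟩ := mem_zOneDiv.mp q.2
    have hq' : q = ⟨(m : ℚ) / 3 ^ k, mem_zOneDiv.mpr ⟨k, m, rfl⟩⟩ := Subtype.ext hq
    rw [hq', jL_eq_diag, diag_zsmul]
    have hgen : ofL k ![1, 1] ∈ AddSubgroup.closure {x : L | ∃ k : ℕ, x = ofL k ![1, 1]} :=
      AddSubgroup.subset_closure ⟨k, rfl⟩
    exact zsmul_mem hgen m
  · rw [AddSubgroup.closure_le]
    rintro x ⟨k, rfl⟩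
    refine ⟨⟨(1 : ℚ) / 3 ^ k, mem_zOneDiv.mpr ⟨k, 1, by norm_num⟩⟩, ?_⟩
    have := jL_eq_diag k 1
    simp only [Int.cast_one] at this
    rw [this]

def q0 : ℚ × ℤ →+ ℚ where
  toFun p := (p.1 - (p.2 : ℚ)) / 2
  map_zero' := by simp
  map_add' p p' := by
    simp only [Prod.fst_add, Prod.snd_add]
    push_cast
    ring

def psi0 : L →+ ℚ := q0.comp Phi

lemma psi0_apply (x : L) : psi0 x = ((Phi x).1 - ((Phi x).2 : ℚ)) / 2 := rfl

lemma piL_apply (x : L) : piL x = (Phi x).2 := rfl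

lemma pow3_cast (k : ℕ) (t : ℤ) (ht : (3:ℤ)^k = 2*t+1) : ((3:ℚ))^k = 2*t+1 := by
  exact_mod_cast congrArg (fun z : ℤ => (z : ℚ)) ht

lemma psi0_mem (x : L) : psi0 x ∈ zOneDiv 3 := by
  obtain ⟨k, v, rfl⟩ := exists_rep x
  obtain ⟨t, ht⟩ := pow3_odd k
  have h3 : ((3:ℚ))^k = 2*t+1 := pow3_cast k t ht
  have hne : ((3:ℚ))^k ≠ 0 := by positivity
  apply mem_zOneDiv.mpr
  refine ⟨k, v 0 - t * (v 1 - v 0), ?_⟩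
  rw [psi0_apply, Phi_ofL]
  field_simp
  push_cast
  linear_combination ((v 0 : ℚ) - v 1) * h3

def PsiPair : L →+ ↥(zOneDiv 3) × ℤ :=
  (psi0.codRestrict (zOneDiv 3) psi0_mem).prod piL

lemma Phi_fst (x : L) : (Phi x).1 = 2 * psi0 x + ((piL x : ℤ) : ℚ) := by
  rw [psi0_apply, piL_apply]
  ring

lemma PsiPair_inj : Function.Injective PsiPair := by
  intro x y h
  have h1 : psi0 x = psi0 y := congrArg (fun p : ↥(zOneDiv 3) × ℤ => (p.1 : ℚ)) h
  have h2 : piL x = piL y := congrArg (fun p : ↥(zOneDiv 3) × ℤ => p.2) h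
  apply Phi_inj
  have hfst : (Phi x).1 = (Phi y).1 := by rw [Phi_fst, Phi_fst, h1, h2]
  have hsnd : (Phi x).2 = (Phi y).2 := by rw [← piL_apply, ← piL_apply, h2]
  exact Prod.ext hfst hsnd

lemma PsiPair_surj : Function.Surjective PsiPair := by
  rintro ⟨q, n⟩
  obtain ⟨k, m, hq⟩ := mem_zOneDiv.mp q.2
  obtain ⟨t, ht⟩ := pow3_odd k
  have h3 : ((3:ℚ))^k = 2*t+1 := pow3_cast k t ht
  have hne : ((3:ℚ))^k ≠ 0 := by positivity
  refine ⟨ofL k ![m + n * t, m + n * t + n], ?_⟩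
  have hv0 : (![m + n * t, m + n * t + n] : Fin 2 → ℤ) 0 = m + n * t := rfl
  have hv1 : (![m + n * t, m + n * t + n] : Fin 2 → ℤ) 1 = m + n * t + n := rfl
  refine Prod.ext (Subtype.ext ?_) ?_
  · show psi0 _ = (q : ℚ)
    rw [psi0_apply, Phi_ofL, hq]
    simp only [hv0, hv1]
    field_simp
    push_cast
    linear_combination -(n : ℚ) * h3
  · show piL _ = n
    rw [piL_ofL, hv0, hv1]
    ring

lemma piL_surj : Function.Surjective piL := by
  intro n
  exact ⟨sL n, DFunLike.congr_fun piL_comp_sL n⟩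

/-- For `σ = [[2,1],[1,2]]`, the direct limit `lim→(ℤ², σ)` fits into a split short exact
sequence `0 → ℤ[1/3] → lim→(ℤ², σ) → ℤ → 0`, where the `ℤ[1/3]` summand is the subgroup
generated by the classes of the eigenvector `(1,1)` at all stages; consequently
`lim→(ℤ², σ) ≅ ℤ[1/3] ⊕ ℤ`. -/
theorem stmt4 :
    ∃ (j : ↥(zOneDiv 3) →+ L) (π : L →+ ℤ) (s : ℤ →+ L),
      Function.Injective j ∧ Function.Surjective π ∧
      π.ker = j.range ∧ π.comp s = AddMonoidHom.id ℤ ∧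
      j.range = AddSubgroup.closure {x : L | ∃ k : ℕ, x = ofL k ![1, 1]} ∧
      Nonempty (L ≃+ ↥(zOneDiv 3) × ℤ) := by
  exact ⟨jL, piL, sL, jL_inj, piL_surj, ker_eq_range, piL_comp_sL, range_eq_closure,
    ⟨AddEquiv.ofBijective PsiPair ⟨PsiPair_inj, PsiPair_surj⟩⟩⟩
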